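/- The Lambropoulou function X is invariant under the algebraic Markov moves for the solid torus: for all n and all α, β ∈ B_{1,n}, X(αβ) = X(βα) (conjugation invariance) and X(t^{±1} α t^{∓1}) = X(α) (loop conjugation invariance); and for the natural inclusion ι : B_{1,n} → B_{1,n+1}, X(ι(α) σ_n^{±1}) = X(α) (stabilization invariance). -/

import Mathlib

set_option synthInstance.maxHeartbeats 1000000
set_option maxHeartbeats 2000000

namespace MB

/-! ## The mixed braid group `B_{1,n}` (with `m = n - 1` braiding generators) -/

/-- Generators: `none` is the looping generator `t`, `some i` is `σ_{i+1}` for `i : Fin m`. -/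
abbrev MBGen (m : ℕ) := Option (Fin m)

/-- The relators of the mixed braid group `B_{1,n}` (`m = n-1`):
`σ₁tσ₁t = tσ₁tσ₁`; `tσ_i = σ_i t` for `i > 1`; the braid relations among the `σ_i`. -/
def rels (m : ℕ) : Set (FreeGroup (MBGen m)) :=
  { r | (∃ h : 0 < m,
          r = (FreeGroup.of (some ⟨0, h⟩) * FreeGroup.of none) ^ 2 *
              ((FreeGroup.of (none : MBGen m) * FreeGroup.of (some ⟨0, h⟩)) ^ 2)⁻¹) ∨
        (∃ i : Fin m, 1 ≤ (i : ℕ) ∧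
          r = FreeGroup.of (none : MBGen m) * FreeGroup.of (some i) *
              (FreeGroup.of (some i) * FreeGroup.of (none : MBGen m))⁻¹) ∨
        (∃ i j : Fin m, (i : ℕ) + 1 = (j : ℕ) ∧
          r = FreeGroup.of (some i) * FreeGroup.of (some j) * FreeGroup.of (some i) *
              (FreeGroup.of (some j) * FreeGroup.of (some i) * FreeGroup.of (some j))⁻¹) ∨
        (∃ i j : Fin m, (i : ℕ) + 1 < (j : ℕ) ∧
          r = FreeGroup.of (some i) * FreeGroup.of (some j) *
              (FreeGroup.of (some j) * FreeGroup.of (some i))⁻¹) }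

/-- The mixed braid group `B_{1,n}` with `n = m+1` moving strands. -/
abbrev B (m : ℕ) := PresentedGroup (rels m)

/-- The braiding generator `σ_{i+1}`, for `i : Fin m`. -/
def σ {m : ℕ} (i : Fin m) : B m := PresentedGroup.of (some i)

/-- The looping generator `t`. -/
def τ {m : ℕ} : B m := PresentedGroup.of none

/-- `σ_j` in one-based indexing (`1 ≤ j ≤ m`), junk value `1` out of range. -/
def sig {m : ℕ} (j : ℕ) : B m :=
  if h : 1 ≤ j ∧ j - 1 < m then σ ⟨j - 1, h.2⟩ else 1

/-- The looping elements `t_i = σ_i ⋯ σ_1 t σ_1 ⋯ σ_i` (for `0 ≤ i ≤ m`), via `t_0 = t`,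
`t_{j+1} = σ_{j+1} t_j σ_{j+1}`. -/
def tt {m : ℕ} : ℕ → B m
  | 0 => τ
  | (j+1) => sig (j+1) * tt j * sig (j+1)

/-- The looping elements `t′_i = σ_i ⋯ σ_1 t σ_1⁻¹ ⋯ σ_i⁻¹` (for `0 ≤ i ≤ m`), via `t′_0 = t`,
`t′_{j+1} = σ_{j+1} t′_j σ_{j+1}⁻¹`. -/
def tp {m : ℕ} : ℕ → B m
  | 0 => τ
  | (j+1) => sig (j+1) * tp j * (sig (j+1))⁻¹

/-! ## The generalized Iwahori–Hecke algebra of type B, `H_{1,n}(q)` -/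

/-- The ground ring `R = ℂ[q^{±1}]` of Laurent polynomials. -/
abbrev R : Type := LaurentPolynomial ℂ

instance : IsDomain R := NoZeroDivisors.to_isDomain _

/-- The variable `q ∈ R`. -/
noncomputable def qq : R := LaurentPolynomial.T 1

/-- The quadratic Hecke relations `σ_i² = (q-1)σ_i + q`. -/
inductive heckeRel (m : ℕ) :
    MonoidAlgebra R (B m) → MonoidAlgebra R (B m) → Prop
  | quad (i : Fin m) : heckeRel m
      (MonoidAlgebra.of R (B m) (σ i) * MonoidAlgebra.of R (B m) (σ i))
      ((qq - 1) • MonoidAlgebra.of R (B m) (σ i) + qq • (1 : MonoidAlgebra R (B m)))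

/-- The generalized Iwahori–Hecke algebra of type B, `H_{1,n}(q)` (`n = m+1`), as the quotient
of the group algebra `R[B_{1,n}]` by the two-sided ideal generated by the quadratic relations. -/
abbrev H (m : ℕ) := RingQuot (heckeRel m)

/-- The canonical multiplicative map `π : B_{1,n} → H_{1,n}(q)`. -/
noncomputable def pih (m : ℕ) : B m →* H m :=
  (RingQuot.mkRingHom (heckeRel m)).toMonoidHom.comp (MonoidAlgebra.of R (B m))

/-- The subalgebra `H_n(q)` of `H_{1,n}(q)` generated by the images `g_1, …, g_{n-1}`
of `σ_1, …, σ_{n-1}`. -/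
noncomputable def HA (m : ℕ) : Subalgebra R (H m) :=
  Algebra.adjoin R (Set.range fun i : Fin m => pih m (σ i))

/-! ## The trace field `F` -/

/-- Polynomials over `R` in the variables `z` (= `X none`) and `s_k`, `k ∈ ℤ` (= `X (some k)`). -/
abbrev P : Type := MvPolynomial (Option ℤ) R

/-- The field of fractions `F` of `P`. -/
abbrev F : Type := FractionRing P

/-- The variable `z ∈ F`. -/
noncomputable def zF : F := algebraMap P F (MvPolynomial.X none)

/-- The variable `s_k ∈ F`, for `k ∈ ℤ`. -/
noncomputable def sF (k : ℤ) : F := algebraMap P F (MvPolynomial.X (some k))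

/-- The image of `q` in `F`. -/
noncomputable def qF : F := algebraMap R F qq

/-! ## The natural inclusions and the Markov trace -/

/-- `ι : B_{1,n} → B_{1,n+1}` is the natural inclusion: it sends `t ↦ t` and `σ_i ↦ σ_i`. -/
def IsGrpIncl {m : ℕ} (ι : B m →* B (m+1)) : Prop :=
  ι τ = τ ∧ ∀ i : Fin m, ι (σ i) = σ i.castSucc

/-- `f : H_{1,n}(q) → H_{1,n+1}(q)` is the natural inclusion: it is induced by the natural
inclusion `B_{1,n} → B_{1,n+1}`. -/
def IsInclusion {m : ℕ} (f : H m →ₐ[R] H (m+1)) : Prop :=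
  ∃ ι : B m →* B (m+1), IsGrpIncl ι ∧ ∀ x : B m, f (pih m x) = pih (m+1) (ι x)

/-- The Markov trace rules for a family of `R`-linear maps `tr : H_{1,n}(q) → F`:
compatibility with the natural inclusions, `tr(ab) = tr(ba)`, `tr(1) = 1`,
`tr(a g_n) = z·tr(a)` and `tr(a (t′_n)^k) = s_k·tr(a)`. -/
structure IsMarkovTrace (tr : ∀ m, H m →ₗ[R] F) : Prop where
  compat : ∀ (m : ℕ) (f : H m →ₐ[R] H (m+1)), IsInclusion f →
    ∀ a : H m, tr (m+1) (f a) = tr m a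
  trace_comm : ∀ (m : ℕ) (a b : H m), tr m (a * b) = tr m (b * a)
  trace_one : ∀ m : ℕ, tr m 1 = 1
  markov : ∀ (m : ℕ) (f : H m →ₐ[R] H (m+1)), IsInclusion f → ∀ a : H m,
    tr (m+1) (f a * pih (m+1) (σ (Fin.last m))) = zF * tr m a
  loop_rule : ∀ (m : ℕ) (f : H m →ₐ[R] H (m+1)), IsInclusion f → ∀ (a : H m) (k : ℤ),
    tr (m+1) (f a * pih (m+1) (tp (m+1) ^ k)) = sF k * tr m a

/-! ## The Lambropoulou invariant `X` -/

/-- `λ = (z + 1 − q)/(qz) ∈ F`. -/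
noncomputable def lamF : F := (zF + 1 - qF) / (qF * zF)

/-- A family of exponent-sum homomorphisms `e : B_{1,n} → ℤ`, sending each `σ_i` to `1`
and `t` to `0` (written multiplicatively). -/
def IsExpSum (e : ∀ m, B m →* Multiplicative ℤ) : Prop :=
  ∀ m : ℕ, e m τ = 1 ∧ ∀ i : Fin m, e m (σ i) = Multiplicative.ofAdd 1

/-- The Lambropoulou function
`X(α) = ( −(1−λq)/(√λ(1−q)) )^{n−1} · (√λ)^{e(α)} · tr(π(α))`, for `α ∈ B_{1,n}`, `n = m+1`;
here `φ : F → F'` is the inclusion into a field containing a square root `sl` of `λ`. -/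
noncomputable def Xinv (tr : ∀ m, H m →ₗ[R] F) {F' : Type} [Field F'] (φ : F →+* F')
    (sl : F') (e : ∀ m, B m →* Multiplicative ℤ) (m : ℕ) (α : B m) : F' :=
  (-(1 - φ lamF * φ qF) / (sl * (1 - φ qF))) ^ m * sl ^ (Multiplicative.toAdd (e m α)) *
    φ (tr m (pih m α))

/-! ### Auxiliary lemmas -/

lemma injPF : Function.Injective (algebraMap P F) := IsFractionRing.injective P F

lemma algebraMap_RF (r : R) : algebraMap R F r = algebraMap P F (MvPolynomial.C r) :=
  IsScalarTower.algebraMap_apply R P F r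

lemma qq_ne_one : (qq : R) ≠ 1 := by
  intro h
  rw [qq, ← LaurentPolynomial.T_zero] at h
  have := congrArg (fun p : R => p.coeff 1) h
  simp only [LaurentPolynomial.T_apply] at this
  norm_num at this

lemma qq_mul_T : (qq : R) * LaurentPolynomial.T (-1) = 1 := by
  rw [qq, ← LaurentPolynomial.T_add]; norm_num

lemma qF_ne_zero : qF ≠ 0 := by
  intro h
  have h2 : (algebraMap R F) (qq * LaurentPolynomial.T (-1)) = 0 := by
    rw [map_mul, show algebraMap R F qq = qF from rfl, h, zero_mul]
  rw [qq_mul_T, map_one] at h2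
  exact one_ne_zero h2

lemma zF_ne_zero : zF ≠ 0 := by
  intro h
  have : (MvPolynomial.X (none : Option ℤ) : P) = 0 := injPF (by rw [map_zero]; exact h)
  exact MvPolynomial.X_ne_zero _ this

lemma qF_ne_one : qF ≠ 1 := by
  intro h
  have h2 : algebraMap P F (MvPolynomial.C qq) = algebraMap P F (MvPolynomial.C 1) := by
    rw [← algebraMap_RF, ← algebraMap_RF]; simp only [map_one]; exact h
  exact qq_ne_one (MvPolynomial.C_injective _ _ (injPF h2))

lemma num_ne_zero : zF + 1 - qF ≠ 0 := by
  intro h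
  have h2 : algebraMap P F (MvPolynomial.X none + 1 - MvPolynomial.C qq) = 0 := by
    rw [map_sub, map_add, map_one, ← algebraMap_RF]; exact h
  have h3 : (MvPolynomial.X none + 1 - MvPolynomial.C qq : P) = 0 := injPF (by rw [map_zero]; exact h2)
  have h4 := congrArg (MvPolynomial.eval (fun _ => (0 : R))) h3
  simp only [map_sub, map_add, MvPolynomial.eval_X, MvPolynomial.eval_C, map_one, map_zero] at h4
  exact qq_ne_one (by linear_combination -h4)

lemma lamF_ne_zero : lamF ≠ 0 :=
  div_ne_zero num_ne_zero (mul_ne_zero qF_ne_zero zF_ne_zero)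

lemma lamF_key : lamF * (qF * zF) = zF + 1 - qF :=
  div_mul_cancel₀ _ (mul_ne_zero qF_ne_zero zF_ne_zero)

lemma mapDomain_of {m : ℕ} (ι : B m →* B (m+1)) (x : B m) :
    MonoidAlgebra.mapDomainAlgHom R R ι (MonoidAlgebra.of R (B m) x) =
      MonoidAlgebra.of R (B (m+1)) (ι x) := by
  simp [MonoidAlgebra.of_apply, MonoidAlgebra.mapDomainAlgHom, MonoidAlgebra.mapDomainRingHom,
    Finsupp.mapDomain_single]

/-- The algebra inclusion `H m →ₐ H (m+1)` induced by a group inclusion. -/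
noncomputable def mapH {m : ℕ} (ι : B m →* B (m+1)) (hι : IsGrpIncl ι) : H m →ₐ[R] H (m+1) :=
  RingQuot.liftAlgHom R ⟨(RingQuot.mkAlgHom R (heckeRel (m+1))).comp
      (MonoidAlgebra.mapDomainAlgHom R R ι), by
    rintro x y ⟨i⟩
    have h1 : MonoidAlgebra.mapDomainAlgHom R R ι
        (MonoidAlgebra.of R (B m) (σ i) * MonoidAlgebra.of R (B m) (σ i)) =
        MonoidAlgebra.of R (B (m+1)) (σ i.castSucc) *
          MonoidAlgebra.of R (B (m+1)) (σ i.castSucc) := by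
      rw [map_mul, mapDomain_of, hι.2 i]
    have h2 : MonoidAlgebra.mapDomainAlgHom R R ι
        ((qq - 1) • MonoidAlgebra.of R (B m) (σ i) + qq • 1) =
        (qq - 1) • MonoidAlgebra.of R (B (m+1)) (σ i.castSucc) + qq • 1 := by
      rw [map_add, map_smul, map_smul, map_one, mapDomain_of, hι.2 i]
    simp only [AlgHom.comp_apply, h1, h2]
    exact RingQuot.mkAlgHom_rel R (heckeRel.quad i.castSucc)⟩

lemma pih_eq (m : ℕ) (x : B m) :
    pih m x = RingQuot.mkAlgHom R (heckeRel m) (MonoidAlgebra.of R (B m) x) := by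
  have h : pih m x = RingQuot.mkRingHom (heckeRel m) (MonoidAlgebra.of R (B m) x) := rfl
  rw [h, ← RingQuot.mkAlgHom_coe R]; rfl

lemma mapH_pih {m : ℕ} (ι : B m →* B (m+1)) (hι : IsGrpIncl ι) (x : B m) :
    mapH ι hι (pih m x) = pih (m+1) (ι x) := by
  rw [pih_eq, mapH, RingQuot.liftAlgHom_mkAlgHom_apply, AlgHom.comp_apply, mapDomain_of,
    ← pih_eq]

lemma isIncl {m : ℕ} (ι : B m →* B (m+1)) (hι : IsGrpIncl ι) : IsInclusion (mapH ι hι) :=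
  ⟨ι, hι, mapH_pih ι hι⟩

lemma e_incl {e : ∀ m, B m →* Multiplicative ℤ} (he : IsExpSum e) {m : ℕ}
    (ι : B m →* B (m+1)) (hι : IsGrpIncl ι) (α : B m) : e (m+1) (ι α) = e m α := by
  have h : (e (m+1)).comp ι = e m := by
    refine PresentedGroup.ext fun x => ?_
    cases x with
    | none =>
        show e (m+1) (ι τ) = e m τ
        rw [hι.1, (he (m+1)).1, (he m).1]
    | some i =>
        show e (m+1) (ι (σ i)) = e m (σ i)
        rw [hι.2 i, (he (m+1)).2, (he m).2]
  exact DFunLike.congr_fun h α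

lemma quadH {m : ℕ} (i : Fin m) :
    pih m (σ i) * pih m (σ i) = (qq - 1) • pih m (σ i) + qq • 1 := by
  have h := RingQuot.mkAlgHom_rel R (heckeRel.quad i)
  simp only [map_mul, map_add, map_smul, map_one] at h
  rw [pih_eq]; exact h

lemma pih_sigma_inv {m : ℕ} (i : Fin m) :
    pih m ((σ i)⁻¹) = (LaurentPolynomial.T (-1) : R) • (pih m (σ i) - (qq - 1) • 1) := by
  set g := pih m (σ i) with hg
  set h := (LaurentPolynomial.T (-1) : R) • (g - (qq - 1) • 1) with hh
  have hgh : g * h = 1 := by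
    rw [hh, mul_smul_comm]
    rw [mul_sub g g ((qq - 1) • (1 : H m)), mul_smul_comm (qq - 1) g (1 : H m), mul_one,
      quadH i, ← hg]
    have hc : (qq - 1) • g + qq • (1 : H m) - (qq - 1) • g = qq • 1 := by abel
    rw [hc, smul_smul, mul_comm, qq_mul_T, one_smul]
  calc pih m ((σ i)⁻¹) = pih m ((σ i)⁻¹) * (g * h) := by rw [hgh, mul_one]
    _ = (pih m ((σ i)⁻¹) * g) * h := by rw [mul_assoc]
    _ = h := by rw [hg, ← map_mul, inv_mul_cancel, map_one, one_mul]
/-- The Lambropoulou function `X` is invariant under the algebraic Markov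
moves for the solid torus: conjugation, loop conjugation and stabilization. -/
theorem X_markov_invariance (tr : ∀ m, H m →ₗ[R] F) (htr : IsMarkovTrace tr)
    (e : ∀ m, B m →* Multiplicative ℤ) (he : IsExpSum e)
    (F' : Type) [Field F'] (φ : F →+* F') (sl : F') (hsl : sl ^ 2 = φ lamF) :
    (∀ (m : ℕ) (α β : B m),
        Xinv tr φ sl e m (α * β) = Xinv tr φ sl e m (β * α)) ∧
    (∀ (m : ℕ) (α : B m),
        Xinv tr φ sl e m (τ * α * τ⁻¹) = Xinv tr φ sl e m α ∧
        Xinv tr φ sl e m (τ⁻¹ * α * τ) = Xinv tr φ sl e m α) ∧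
    ∀ (m : ℕ) (ι : B m →* B (m+1)), IsGrpIncl ι → ∀ α : B m,
        Xinv tr φ sl e (m+1) (ι α * σ (Fin.last m)) = Xinv tr φ sl e m α ∧
        Xinv tr φ sl e (m+1) (ι α * (σ (Fin.last m))⁻¹) = Xinv tr φ sl e m α := by
  -- nonvanishing facts in `F'`
  have hφ : Function.Injective φ := φ.injective
  have hφlam : φ lamF ≠ 0 := fun h => lamF_ne_zero (hφ (by rw [h, map_zero]))
  have hsl0 : sl ≠ 0 := by
    intro h; rw [h] at hsl; exact hφlam (by rw [← hsl]; ring)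
  have hφz : φ zF ≠ 0 := fun h => zF_ne_zero (hφ (by rw [h, map_zero]))
  have hφq : φ qF ≠ 0 := fun h => qF_ne_zero (hφ (by rw [h, map_zero]))
  have hφq1 : (1 : F') - φ qF ≠ 0 := by
    intro h
    have : φ qF = φ 1 := by rw [map_one]; linear_combination -h
    exact qF_ne_one (hφ this)
  have hlamφ : φ lamF * (φ qF * φ zF) = φ zF + 1 - φ qF := by
    have := congrArg φ lamF_key
    simpa only [map_mul, map_sub, map_add, map_one] using this
  set C : F' := -(1 - φ lamF * φ qF) / (sl * (1 - φ qF)) with hC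
  have hCkey : C * (sl * φ zF) = 1 := by
    rw [hC]
    field_simp
    linear_combination hlamφ
  refine ⟨?_, ?_, ?_⟩
  · -- conjugation
    intro m α β
    simp only [Xinv, map_mul]
    rw [mul_comm (e m α) (e m β), htr.trace_comm m (pih m α) (pih m β)]
  · -- loop conjugation
    intro m α
    have hτ : ∀ γ : B m, tr m (pih m (γ * α * γ⁻¹)) = tr m (pih m α) := by
      intro γ
      have h1 : pih m (γ * α * γ⁻¹) = pih m γ * (pih m α * pih m γ⁻¹) := by
        rw [map_mul, map_mul, mul_assoc]
      rw [h1, htr.trace_comm, mul_assoc, ← map_mul, inv_mul_cancel, map_one, mul_one]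
    have heτ : ∀ γ : B m, e m γ = 1 → e m (γ * α * γ⁻¹) = e m α := by
      intro γ hγ
      rw [map_mul, map_mul, map_inv, hγ, one_mul, inv_one, mul_one]
    constructor
    · simp only [Xinv]
      rw [hτ τ, heτ τ (he m).1]
    · have hrw : (τ⁻¹ * α * τ : B m) = τ⁻¹ * α * (τ⁻¹)⁻¹ := by rw [inv_inv]
      simp only [Xinv, hrw]
      rw [hτ τ⁻¹, heτ τ⁻¹ (by rw [map_inv, (he m).1, inv_one])]
  · -- stabilization
    intro m ι hι α
    have hf := isIncl ι hι
    have hcompat := htr.compat m (mapH ι hι) hf (pih m α)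
    rw [mapH_pih] at hcompat
    have he' := e_incl he ι hι α
    constructor
    · -- positive stabilization
      have htrace : tr (m+1) (pih (m+1) (ι α * σ (Fin.last m))) = zF * tr m (pih m α) := by
        rw [map_mul, ← mapH_pih ι hι]
        exact htr.markov m (mapH ι hι) hf (pih m α)
      have hexp : Multiplicative.toAdd (e (m+1) (ι α * σ (Fin.last m))) =
          Multiplicative.toAdd (e m α) + 1 := by
        rw [map_mul, he', (he (m+1)).2, toAdd_mul, toAdd_ofAdd]
      simp only [Xinv, ← hC]
      rw [htrace, hexp, pow_succ, zpow_add_one₀ hsl0, map_mul]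
      linear_combination (C ^ m * sl ^ (Multiplicative.toAdd (e m α)) *
        φ (tr m (pih m α))) * hCkey
    · -- negative stabilization
      have htrace : tr (m+1) (pih (m+1) (ι α * (σ (Fin.last m))⁻¹)) =
          lamF * zF * tr m (pih m α) := by
        rw [map_mul, pih_sigma_inv, ← mapH_pih ι hι]
        rw [mul_smul_comm, map_smul,
          mul_sub ((mapH ι hι) (pih m α)) (pih (m+1) (σ (Fin.last m))) ((qq - 1) • (1 : H (m+1))),
          mul_smul_comm (qq - 1) ((mapH ι hι) (pih m α)) (1 : H (m+1)), mul_one, map_sub, map_smul]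
        rw [htr.markov m (mapH ι hι) hf (pih m α), htr.compat m (mapH ι hι) hf (pih m α)]
        have hsmul : ∀ (c : R) (y : F), c • y = algebraMap R F c * y :=
          fun c y => Algebra.smul_def c y
        rw [hsmul, hsmul]
        have hT : algebraMap R F (LaurentPolynomial.T (-1)) * qF = 1 := by
          rw [show qF = algebraMap R F qq from rfl, ← map_mul, mul_comm, qq_mul_T, map_one]
        have hq1 : algebraMap R F (qq - 1) = qF - 1 := by
          rw [map_sub, map_one]; rfl
        rw [hq1]
        have hz : qF * zF ≠ 0 := mul_ne_zero qF_ne_zero zF_ne_zero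
        rw [lamF]
        linear_combination ((zF + 1 - qF) * tr m (pih m α)) * qF⁻¹ * hT -
          ((zF + 1 - qF) * tr m (pih m α)) * algebraMap R F (LaurentPolynomial.T (-1)) *
            mul_inv_cancel₀ qF_ne_zero -
          ((zF + 1 - qF) * tr m (pih m α)) * qF⁻¹ * mul_inv_cancel₀ zF_ne_zero
      have hexp : Multiplicative.toAdd (e (m+1) (ι α * (σ (Fin.last m))⁻¹)) =
          Multiplicative.toAdd (e m α) + (-1) := by
        rw [map_mul, map_inv, he', (he (m+1)).2, toAdd_mul, toAdd_inv, toAdd_ofAdd]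
      simp only [Xinv, ← hC]
      rw [htrace, hexp, pow_succ, zpow_add₀ hsl0, zpow_neg_one, map_mul, map_mul]
      have hφl : φ lamF = sl * sl := by rw [← hsl]; ring
      rw [hφl]
      linear_combination (C ^ m * sl ^ (Multiplicative.toAdd (e m α)) *
        φ (tr m (pih m α)) * C * sl * φ zF) * inv_mul_cancel₀ hsl0 +
        (C ^ m * sl ^ (Multiplicative.toAdd (e m α)) * φ (tr m (pih m α))) * hCkey

end MB
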